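/- Let c > 0 and δ ∈ (0, 1) satisfy 1 − exp(−c) ≥ δ, and let r ∈ (δ, 1] be the unique solution of r(1 − exp(−c/r)) = δ. Then the quantity f(c, δ) = −c·log r − H₂(δ) + r·H₂(δ/r) is nonnegative, and equals 0 when δ = 1 − exp(−c), where H₂(x) = x·log(1/x) + (1−x)·log(1/(1−x)) is the binary entropy function (natural log). -/

import Mathlib

noncomputable def expFaux (δ r : ℝ) : ℝ :=
  r * Real.log (r - δ) * Real.log r - r * (Real.log r)^2
    - (r - δ) * Real.log (r - δ) + r * Real.log r + (1 - δ) * Real.log (1 - δ)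

lemma expFaux_hasDerivAt (δ x : ℝ) (hx0 : 0 < x) (hxδ : δ < x) :
    HasDerivAt (expFaux δ)
      (Real.log x * (Real.log (x - δ) - Real.log x + δ / (x - δ))) x := by
  have hd : 0 < x - δ := sub_pos.mpr hxδ
  have hA : HasDerivAt (fun y : ℝ => Real.log (y - δ)) (1 / (x - δ)) x := by
    have := (Real.hasDerivAt_log hd.ne').comp x ((hasDerivAt_id x).sub_const δ)
    simp only [mul_one] at this
    rw [one_div]; exact this
  have hB : HasDerivAt Real.log x⁻¹ x := Real.hasDerivAt_log hx0.ne'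
  have h1 : HasDerivAt (fun y : ℝ => y * Real.log (y - δ) * Real.log y)
      ((1 * Real.log (x - δ) + x * (1 / (x - δ))) * Real.log x
        + x * Real.log (x - δ) * x⁻¹) x :=
    (((hasDerivAt_id x).mul hA).mul hB)
  have h2 : HasDerivAt (fun y : ℝ => y * (Real.log y)^2)
      (1 * (Real.log x)^2 + x * (2 * Real.log x * x⁻¹)) x := by
    have hsq : HasDerivAt (fun y : ℝ => (Real.log y)^2) (2 * Real.log x * x⁻¹) x := by
      have := hB.pow 2
      exact this.congr_deriv (by ring)
    exact (hasDerivAt_id x).mul hsq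
  have h3 : HasDerivAt (fun y : ℝ => (y - δ) * Real.log (y - δ))
      (1 * Real.log (x - δ) + (x - δ) * (1 / (x - δ))) x :=
    ((hasDerivAt_id x).sub_const δ).mul hA
  have h4 : HasDerivAt (fun y : ℝ => y * Real.log y)
      (1 * Real.log x + x * x⁻¹) x := (hasDerivAt_id x).mul hB
  have := (((h1.sub h2).sub h3).add h4).add_const ((1 - δ) * Real.log (1 - δ))
  refine this.congr_deriv ?_
  field_simp
  ring

lemma expFaux_nonneg (δ r : ℝ) (hδ0 : 0 < δ) (hδr : δ < r) (hr1 : r ≤ 1) :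
    0 ≤ expFaux δ r := by
  have hr0 : 0 < r := hδ0.trans hδr
  have hF1 : expFaux δ 1 = 0 := by simp [expFaux]
  have hanti : AntitoneOn (expFaux δ) (Set.Icc r 1) := by
    apply antitoneOn_of_deriv_nonpos (convex_Icc r 1)
    · -- continuity
      apply ContinuousOn.mono ?_ (Set.Icc_subset_Icc_left le_rfl)
      intro x hx
      have hx0 : 0 < x := lt_of_lt_of_le hr0 hx.1
      have hxδ : δ < x := lt_of_lt_of_le hδr hx.1
      exact ((expFaux_hasDerivAt δ x hx0 hxδ).continuousAt).continuousWithinAt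
    · intro x hx
      rw [interior_Icc] at hx
      have hx0 : 0 < x := hr0.trans hx.1
      have hxδ : δ < x := hδr.trans hx.1
      exact (expFaux_hasDerivAt δ x hx0 hxδ).differentiableAt.differentiableWithinAt
    · intro x hx
      rw [interior_Icc] at hx
      have hx0 : 0 < x := hr0.trans hx.1
      have hxδ : δ < x := hδr.trans hx.1
      have hd : 0 < x - δ := sub_pos.mpr hxδ
      rw [(expFaux_hasDerivAt δ x hx0 hxδ).deriv]
      have hlog : Real.log x ≤ 0 := Real.log_nonpos hx0.le hx.2.le
      have hbr : 0 ≤ Real.log (x - δ) - Real.log x + δ / (x - δ) := by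
        have h1 : Real.log (x / (x - δ)) ≤ x / (x - δ) - 1 :=
          Real.log_le_sub_one_of_pos (div_pos hx0 hd)
        rw [Real.log_div hx0.ne' hd.ne'] at h1
        have h2 : x / (x - δ) - 1 = δ / (x - δ) := by field_simp; ring
        linarith [h1, h2 ▸ h1]
      exact mul_nonpos_of_nonpos_of_nonneg hlog hbr
  have := hanti (Set.mem_Icc.mpr ⟨le_rfl, hr1⟩) (Set.mem_Icc.mpr ⟨hr1, le_rfl⟩) hr1
  rw [hF1] at this
  linarith

/-- Binary entropy function with natural logarithm. -/
noncomputable def binEnt (x : ℝ) : ℝ := x * Real.log (1 / x) + (1 - x) * Real.log (1 / (1 - x))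

/-- Nonnegativity of the error exponent `f(c, δ) = -c log r - H₂(δ) + r H₂(δ/r)`,
where `r ∈ (δ, 1]` solves `r (1 - exp(-c/r)) = δ`; moreover `f(c, δ) = 0` when
`δ = 1 - exp(-c)`. -/
theorem exponent_nonneg (c δ r : ℝ) (hc : 0 < c) (hδ0 : 0 < δ) (hδ1 : δ < 1)
    (h : δ ≤ 1 - Real.exp (-c)) (hr : r ∈ Set.Ioc δ 1)
    (hroot : r * (1 - Real.exp (-c / r)) = δ) :
    0 ≤ -c * Real.log r - binEnt δ + r * binEnt (δ / r) ∧
    (δ = 1 - Real.exp (-c) → -c * Real.log r - binEnt δ + r * binEnt (δ / r) = 0) := by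
  obtain ⟨hδr, hr1⟩ := hr
  have hr0 : 0 < r := hδ0.trans hδr
  have hrδ : 0 < r - δ := sub_pos.mpr hδr
  -- express c in terms of r, δ
  have hexp : Real.exp (-c / r) = (r - δ) / r := by
    field_simp
    rw [neg_div] at hroot; nlinarith [hroot]
  have hc' : c = r * (Real.log r - Real.log (r - δ)) := by
    have := congrArg Real.log hexp
    rw [Real.log_exp, Real.log_div hrδ.ne' hr0.ne'] at this
    have hr0' : (r : ℝ) ≠ 0 := hr0.ne'
    field_simp at this
    linarith
  -- rewrite the target as expFaux δ r
  have key : -c * Real.log r - binEnt δ + r * binEnt (δ / r) = expFaux δ r := by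
    unfold binEnt expFaux
    have e1 : Real.log (δ / r) = Real.log δ - Real.log r := Real.log_div hδ0.ne' hr0.ne'
    have e2 : (1 : ℝ) - δ / r = (r - δ) / r := by field_simp
    have e3 : Real.log ((r - δ) / r) = Real.log (r - δ) - Real.log r :=
      Real.log_div hrδ.ne' hr0.ne'
    simp only [one_div, Real.log_inv]
    rw [hc', e1, e2, e3]
    field_simp
    ring
  constructor
  · rw [key]; exact expFaux_nonneg δ r hδ0 hδr hr1
  · intro heq
    have hr_eq : r = 1 := by
      by_contra hne
      have hrlt : r < 1 := lt_of_le_of_ne hr1 hne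
      -- strict convexity of exp
      have hne0 : (0 : ℝ) ≠ -c / r := by
        have : (0:ℝ) < c / r := div_pos hc hr0
        intro hcon
        rw [neg_div] at hcon
        linarith [hcon ▸ this]
      have hcv := strictConvexOn_exp.2 (Set.mem_univ (0 : ℝ)) (Set.mem_univ (-c / r))
        hne0 (by linarith : (0:ℝ) < 1 - r) hr0 (by ring)
      simp only [smul_eq_mul, mul_zero, zero_add, Real.exp_zero, mul_one] at hcv
      have hmc : r * (-c / r) = -c := by field_simp
      rw [hmc] at hcv
      nlinarith [hroot, heq, hcv]
    subst hr_eq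
    rw [key]
    simp [expFaux]
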